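/- The map F ↦ Δ·F is a linear isomorphism from the space of symmetric polynomials in n variables onto the space of alternating polynomials in n variables. -/

import Mathlib

open MvPolynomial

/-- The Vandermonde polynomial `Δ(z₁,…,zₙ) = ∏_{i<j} (z_j - z_i)`. -/
noncomputable def vand (n : ℕ) : MvPolynomial (Fin n) ℂ :=
  ∏ i : Fin n, ∏ j ∈ Finset.Ioi i, (X j - X i)

/-- The submodule of symmetric polynomials in `n` variables. -/
noncomputable def symmP (n : ℕ) : Submodule ℂ (MvPolynomial (Fin n) ℂ) where
  carrier := {F | ∀ σ : Equiv.Perm (Fin n), rename ⇑σ F = F}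
  add_mem' := by intro a b ha hb σ; rw [map_add, ha σ, hb σ]
  zero_mem' := by intro σ; simp
  smul_mem' := by intro c a ha σ; rw [map_smul, ha σ]

/-- The submodule of alternating polynomials in `n` variables. -/
noncomputable def altP (n : ℕ) : Submodule ℂ (MvPolynomial (Fin n) ℂ) where
  carrier := {F | ∀ σ : Equiv.Perm (Fin n),
    rename ⇑σ F = ((Equiv.Perm.sign σ : ℤ) : ℂ) • F}
  add_mem' := by intro a b ha hb σ; rw [map_add, ha σ, hb σ, smul_add]
  zero_mem' := by intro σ; simp
  smul_mem' := by intro c a ha σ; rw [map_smul, ha σ, smul_comm]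

noncomputable def subst (n : ℕ) (i j : Fin n) :
    MvPolynomial (Fin n) ℂ →ₐ[ℂ] MvPolynomial (Fin n) ℂ :=
  aeval (Function.update X j (X i))

lemma subst_X (n : ℕ) (i j k : Fin n) :
    subst n i j (X k) = if k = j then X i else X k := by
  simp [subst, aeval_X, Function.update_apply]

lemma dvd_of_subst_eq_zero {n : ℕ} {i j : Fin n} {G : MvPolynomial (Fin n) ℂ}
    (h : subst n i j G = 0) : (X j - X i) ∣ G := by
  set I : Ideal (MvPolynomial (Fin n) ℂ) := Ideal.span {X j - X i} with hI
  have key : (Ideal.Quotient.mkₐ ℂ I).comp (subst n i j) = Ideal.Quotient.mkₐ ℂ I := by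
    apply MvPolynomial.algHom_ext
    intro k
    simp only [AlgHom.comp_apply, subst_X, Ideal.Quotient.mkₐ_eq_mk]
    split
    · next hk =>
      subst hk
      rw [Ideal.Quotient.eq]
      have : -(X k - X i) ∈ I := I.neg_mem (Ideal.subset_span rfl)
      simpa using this
    · rfl
  have := congrArg (fun f => f G) key
  simp only [AlgHom.comp_apply, h, map_zero, Ideal.Quotient.mkₐ_eq_mk] at this
  rw [← Ideal.mem_span_singleton, ← hI, ← Ideal.Quotient.eq_zero_iff_mem]
  exact this.symm

lemma subst_sub_self {n : ℕ} (i j : Fin n) (hij : i ≠ j) :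
    subst n i j (X j - X i) = 0 := by
  rw [map_sub, subst_X, subst_X, if_pos rfl, if_neg hij]
  ring

lemma prime_X_sub_X {n : ℕ} (i j : Fin n) (hij : i ≠ j) :
    Prime (X j - X i : MvPolynomial (Fin n) ℂ) := by
  have hne : (X j - X i : MvPolynomial (Fin n) ℂ) ≠ 0 :=
    sub_ne_zero.mpr fun h => hij (X_injective h).symm
  rw [← Ideal.span_singleton_prime hne]
  have hker : Ideal.span {(X j - X i : MvPolynomial (Fin n) ℂ)}
      = RingHom.ker (subst n i j).toRingHom := by
    apply le_antisymm
    · rw [Ideal.span_le, Set.singleton_subset_iff]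
      exact subst_sub_self i j hij
    · intro G hG
      exact Ideal.mem_span_singleton.mpr (dvd_of_subst_eq_zero hG)
  rw [hker]
  exact RingHom.ker_isPrime _

lemma prod_primes_dvd'' {ι α : Type*} [CommMonoidWithZero α] [DecidableEq ι]
    (s : Finset ι) (p : ι → α) {G : α}
    (hp : ∀ i ∈ s, Prime (p i))
    (hnd : ∀ i ∈ s, ∀ j ∈ s, i ≠ j → ¬ p i ∣ p j)
    (h : ∀ i ∈ s, p i ∣ G) : (∏ i ∈ s, p i) ∣ G := by
  induction s using Finset.induction_on generalizing G with
  | empty => simp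
  | @insert a s ha ih =>
    rw [Finset.prod_insert ha]
    obtain ⟨H, hH⟩ := h a (Finset.mem_insert_self a s)
    have hdH : ∀ i ∈ s, p i ∣ H := by
      intro i hi
      have hia : i ≠ a := fun h' => ha (h' ▸ hi)
      have := h i (Finset.mem_insert_of_mem hi)
      rw [hH] at this
      rcases (hp i (Finset.mem_insert_of_mem hi)).dvd_mul.mp this with h1 | h2
      · exact absurd h1 (hnd i (Finset.mem_insert_of_mem hi) a (Finset.mem_insert_self a s) hia)
      · exact h2
    have := ih (fun i hi => hp i (Finset.mem_insert_of_mem hi))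
      (fun i hi j hj hij => hnd i (Finset.mem_insert_of_mem hi) j (Finset.mem_insert_of_mem hj) hij)
      hdH
    rw [hH]
    exact mul_dvd_mul_left (p a) this


lemma vand_eq_det (n : ℕ) :
    vand n = (Matrix.vandermonde fun i : Fin n => (X i : MvPolynomial (Fin n) ℂ)).det :=
  (Matrix.det_vandermonde _).symm

lemma rename_vand (n : ℕ) (σ : Equiv.Perm (Fin n)) :
    rename ⇑σ (vand n) = ((Equiv.Perm.sign σ : ℤ) : ℂ) • vand n := by
  have key : rename ⇑σ (vand n)
      = ((Equiv.Perm.sign σ : ℤˣ) : MvPolynomial (Fin n) ℂ) * vand n := by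
    rw [vand_eq_det, AlgHom.map_det]
    have hmap : (rename ⇑σ : MvPolynomial (Fin n) ℂ →ₐ[ℂ] MvPolynomial (Fin n) ℂ).mapMatrix
          (Matrix.vandermonde fun i : Fin n => (X i : MvPolynomial (Fin n) ℂ))
        = (Matrix.vandermonde fun i : Fin n => (X i : MvPolynomial (Fin n) ℂ)).submatrix ⇑σ id := by
      ext i k
      simp [Matrix.vandermonde, Matrix.map_apply, Matrix.submatrix_apply]
    rw [hmap, Matrix.det_permute]
  rcases Int.units_eq_one_or (Equiv.Perm.sign σ) with h | h <;>
    rw [key, h] <;> simp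

lemma vand_ne_zero (n : ℕ) : vand n ≠ 0 := by
  unfold vand
  rw [Finset.prod_ne_zero_iff]
  intro i _
  rw [Finset.prod_ne_zero_iff]
  intro j hj
  exact sub_ne_zero.mpr fun h =>
    (Finset.mem_Ioi.mp hj).ne' (X_injective h)

lemma subst_eq_zero_of_alt {n : ℕ} {G : MvPolynomial (Fin n) ℂ} (hG : G ∈ altP n)
    {i j : Fin n} (hij : i ≠ j) : subst n i j G = 0 := by
  have hcomp : (subst n i j).comp (rename ⇑(Equiv.swap i j) :
      MvPolynomial (Fin n) ℂ →ₐ[ℂ] MvPolynomial (Fin n) ℂ) = subst n i j := by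
    apply MvPolynomial.algHom_ext
    intro k
    simp only [AlgHom.comp_apply, rename_X, subst_X]
    rcases eq_or_ne k i with rfl | hki
    · rw [Equiv.swap_apply_left, if_pos rfl, if_neg hij]
    · rcases eq_or_ne k j with rfl | hkj
      · simp [Equiv.swap_apply_right]
      · rw [Equiv.swap_apply_of_ne_of_ne hki hkj]
  have h1 : subst n i j G = subst n i j (rename ⇑(Equiv.swap i j) G) :=
    (congrArg (fun f => f G) hcomp).symm
  rw [hG (Equiv.swap i j), Equiv.Perm.sign_swap hij, map_smul] at h1
  have h2 : subst n i j G = - subst n i j G := by simpa using h1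
  have h3 : subst n i j G + subst n i j G = 0 := by
    nth_rewrite 2 [h2]; ring
  exact add_self_eq_zero.mp h3

lemma vand_dvd_of_alt {n : ℕ} {G : MvPolynomial (Fin n) ℂ} (hG : G ∈ altP n) :
    vand n ∣ G := by
  classical
  have hvand : vand n = ∏ x ∈ (Finset.univ.sigma fun i : Fin n => Finset.Ioi i),
      (X x.2 - X x.1 : MvPolynomial (Fin n) ℂ) := by
    unfold vand
    exact (Finset.prod_sigma Finset.univ (fun i : Fin n => Finset.Ioi i)
      (fun x : (_ : Fin n) × Fin n => (X x.2 - X x.1 : MvPolynomial (Fin n) ℂ))).symm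
  rw [hvand]
  have hmem : ∀ x ∈ (Finset.univ.sigma fun i : Fin n => Finset.Ioi i), x.1 < x.2 := by
    intro x hx
    exact Finset.mem_Ioi.mp (Finset.mem_sigma.mp hx).2
  apply prod_primes_dvd''
  · intro x hx
    exact prime_X_sub_X x.1 x.2 (hmem x hx).ne
  · intro x hx y hy hxy hdvd
    have hij := hmem x hx
    have hkl := hmem y hy
    have h0 : subst n x.1 x.2 (X y.2 - X y.1) = 0 := by
      obtain ⟨q, hq⟩ := hdvd
      rw [hq, map_mul, subst_sub_self x.1 x.2 (hmem x hx).ne, zero_mul]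
    rw [map_sub, subst_X, subst_X, sub_eq_zero] at h0
    obtain ⟨a, b⟩ := x
    obtain ⟨c, d⟩ := y
    simp only at h0 hij hkl
    by_cases hl : d = b <;> by_cases hk : c = b <;>
      simp only [hl, hk, if_pos, if_neg, if_true, if_false] at h0
    · exact absurd (hk.trans hl.symm) hkl.ne
    · have hca : c = a := (X_injective h0).symm
      exact hxy (by simp [hca, hl])
    · have hda : d = a := X_injective h0
      rw [hk] at hkl
      exact absurd (hij.trans (hkl.trans_eq hda)) (lt_irrefl a)
    · exact hkl.ne' (X_injective h0)
  · intro x hx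
    exact dvd_of_subst_eq_zero (subst_eq_zero_of_alt hG (hmem x hx).ne)

lemma sign_cast_ne_zero {n : ℕ} (σ : Equiv.Perm (Fin n)) :
    ((Equiv.Perm.sign σ : ℤ) : ℂ) ≠ 0 := by
  rcases Int.units_eq_one_or (Equiv.Perm.sign σ) with h | h <;> rw [h] <;> norm_num

/-- Multiplication by the Vandermonde `Δ` is a linear isomorphism from symmetric
polynomials onto alternating polynomials. -/
theorem mul_vandermonde_linear_iso_symm_alt (n : ℕ) :
    ∃ e : symmP n ≃ₗ[ℂ] altP n,
      ∀ F : symmP n, (e F : MvPolynomial (Fin n) ℂ) = vand n * (F : MvPolynomial (Fin n) ℂ) := by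
  have halt : ∀ F : MvPolynomial (Fin n) ℂ, F ∈ symmP n → vand n * F ∈ altP n := by
    intro F hF σ
    rw [map_mul, rename_vand, hF σ, smul_mul_assoc]
  let L : symmP n →ₗ[ℂ] altP n :=
    { toFun := fun F => ⟨vand n * F.1, halt F.1 F.2⟩
      map_add' := by intro a b; apply Subtype.ext; simp [mul_add]
      map_smul' := by intro c a; apply Subtype.ext; simp [mul_smul_comm] }
  have hinj : Function.Injective L := by
    intro a b h
    have h1 : vand n * a.1 = vand n * b.1 := congrArg Subtype.val h
    exact Subtype.ext (mul_left_cancel₀ (vand_ne_zero n) h1)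
  have hsurj : Function.Surjective L := by
    intro G
    obtain ⟨F, hF⟩ := vand_dvd_of_alt G.2
    have hFs : F ∈ symmP n := by
      intro σ
      have h1 : rename ⇑σ G.1 = ((Equiv.Perm.sign σ : ℤ) : ℂ) • G.1 := G.2 σ
      rw [hF, map_mul, rename_vand] at h1
      have h2 : (((Equiv.Perm.sign σ : ℤ) : ℂ) • vand n) * rename ⇑σ F
          = (((Equiv.Perm.sign σ : ℤ) : ℂ) • vand n) * F := by
        rw [h1, smul_mul_assoc]
      exact mul_left_cancel₀ (smul_ne_zero (sign_cast_ne_zero σ) (vand_ne_zero n)) h2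
    refine ⟨⟨F, hFs⟩, ?_⟩
    apply Subtype.ext
    exact hF.symm
  exact ⟨LinearEquiv.ofBijective L ⟨hinj, hsurj⟩, fun F => rfl⟩
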